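/- If μ = 0 and ν ≠ 0 then i·Ω(z) has exactly the eigenvalues ‖ν‖ and -‖ν‖, each with eigenspace of dimension N. Similarly, if ν = 0 and μ ≠ 0 then i·Ω(z) has eigenvalues ±‖μ‖, each of multiplicity N. -/
import Mathlib


open scoped BigOperators Matrix

open Matrix Module

section Key
variable {m : Type*} [Fintype m] [DecidableEq m]

lemma star_mulVec_I_smul (R : Matrix m m ℝ) (v : m → ℂ) :
    star ((Complex.I • R.map Complex.ofReal) *ᵥ v)
      = -((Complex.I • R.map Complex.ofReal) *ᵥ (star v)) := by
  funext i
  simp [Matrix.mulVec, dotProduct, ← Finset.sum_neg_distrib, Complex.ext_iff,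
    Finset.sum_apply, mul_comm]

lemma key [Nonempty m] (R : Matrix m m ℝ) (c : ℝ) (hc : 0 < c)
    (hsq : (Complex.I • R.map Complex.ofReal) * (Complex.I • R.map Complex.ofReal)
      = ((c : ℂ) ^ 2) • 1) :
    spectrum ℂ (Complex.I • R.map Complex.ofReal) = {(c : ℂ), ((-c : ℝ) : ℂ)} ∧
    2 * finrank ℂ (Module.End.eigenspace
        (Matrix.mulVecLin (Complex.I • R.map Complex.ofReal)) (c : ℂ)) = Fintype.card m ∧
    finrank ℂ (Module.End.eigenspace
        (Matrix.mulVecLin (Complex.I • R.map Complex.ofReal)) ((-c : ℝ) : ℂ))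
      = finrank ℂ (Module.End.eigenspace
        (Matrix.mulVecLin (Complex.I • R.map Complex.ofReal)) (c : ℂ)) := by
  set M := Complex.I • R.map Complex.ofReal with hM
  set f := M.mulVecLin with hf
  have hcne : (c : ℂ) ≠ 0 := by exact_mod_cast hc.ne'
  have hff : ∀ v, f (f v) = ((c:ℂ)^2) • v := by
    intro v
    show M *ᵥ (M *ᵥ v) = _
    rw [Matrix.mulVec_mulVec, hsq]
    simp [Matrix.smul_mulVec]
  -- eigenspace membership
  have hmem : ∀ (μ : ℂ) (v : m → ℂ), v ∈ Module.End.eigenspace f μ ↔ f v = μ • v := by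
    intro μ v; exact Module.End.mem_eigenspace_iff
  -- conjugation swaps eigenspaces
  have hconj : ∀ (μ : ℝ) (v : m → ℂ), v ∈ Module.End.eigenspace f (μ:ℂ) →
      star v ∈ Module.End.eigenspace f ((-μ : ℝ):ℂ) := by
    intro μ v hv
    rw [hmem] at hv ⊢
    have h1 : star (f v) = -(f (star v)) := star_mulVec_I_smul R v
    rw [hv] at h1
    have : star ((μ:ℂ) • v) = (μ:ℂ) • star v := by
      rw [star_smul]; simp
    rw [this] at h1
    push_cast
    rw [neg_smul]
    exact neg_eq_iff_eq_neg.mp h1.symm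
  -- conjugation linear equivalence (over ℝ)
  have hfr : ∀ μ : ℝ, finrank ℂ (Module.End.eigenspace f ((-μ : ℝ):ℂ))
      = finrank ℂ (Module.End.eigenspace f (μ:ℂ)) := by
    intro μ
    have e : (Module.End.eigenspace f (μ:ℂ)) ≃ₗ[ℝ] (Module.End.eigenspace f ((-μ:ℝ):ℂ)) :=
      { toFun := fun v => ⟨star v.1, hconj μ v.1 v.2⟩
        invFun := fun v => ⟨star v.1, by simpa using hconj (-μ) v.1 v.2⟩
        map_add' := by intro a b; ext; simp
        map_smul' := by intro r a; ext; simp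
        left_inv := by intro a; ext; simp
        right_inv := by intro a; ext; simp }
    have h1 : finrank ℝ (Module.End.eigenspace f (μ:ℂ))
        = finrank ℝ (Module.End.eigenspace f ((-μ:ℝ):ℂ)) := e.finrank_eq
    have h2 : ∀ μ' : ℂ, finrank ℝ (Module.End.eigenspace f μ')
        = 2 * finrank ℂ (Module.End.eigenspace f μ') := by
      intro μ'
      rw [← Complex.finrank_real_complex]
      exact (Module.finrank_mul_finrank ℝ ℂ _).symm
    rw [h2, h2] at h1
    omega
  have h2c : ((2*c : ℝ):ℂ) ≠ 0 := by
    exact_mod_cast (by positivity : (2*c:ℝ) ≠ 0)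
  -- sup of eigenspaces is everything
  have hsup : Module.End.eigenspace f ((c:ℝ):ℂ) ⊔ Module.End.eigenspace f ((-c:ℝ):ℂ) = ⊤ := by
    rw [eq_top_iff]
    intro v _
    have hv : v = ((2*c:ℝ):ℂ)⁻¹ • ((c:ℂ) • v + f v)
        + ((2*c:ℝ):ℂ)⁻¹ • ((c:ℂ) • v - f v) := by
      rw [← smul_add]
      have h : ((c:ℂ) • v + f v) + ((c:ℂ) • v - f v) = ((2*c:ℝ):ℂ) • v := by
        push_cast; module
      rw [h, smul_smul, inv_mul_cancel₀ h2c, one_smul]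
    rw [hv]
    refine Submodule.add_mem _
      (Submodule.mem_sup_left (Submodule.smul_mem _ _ ?_))
      (Submodule.mem_sup_right (Submodule.smul_mem _ _ ?_))
    · rw [hmem, map_add, f.map_smul, hff]
      module
    · rw [hmem, map_sub, f.map_smul, hff]
      push_cast
      module
  -- disjointness
  have hdisj : Disjoint (Module.End.eigenspace f ((c:ℝ):ℂ))
      (Module.End.eigenspace f ((-c:ℝ):ℂ)) := by
    rw [Submodule.disjoint_def]
    intro v h1 h2
    rw [hmem] at h1 h2
    have h3 : (((c:ℝ):ℂ) - ((-c:ℝ):ℂ)) • v = 0 := by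
      rw [sub_smul, ← h1, ← h2, sub_self]
    have h4 : (((c:ℝ):ℂ) - ((-c:ℝ):ℂ)) = ((2*c:ℝ):ℂ) := by push_cast; ring
    rw [h4] at h3
    exact (smul_eq_zero.mp h3).resolve_left h2c
  -- dimension count
  have hcard : finrank ℂ (Module.End.eigenspace f ((c:ℝ):ℂ))
      + finrank ℂ (Module.End.eigenspace f ((-c:ℝ):ℂ)) = Fintype.card m := by
    have := Submodule.finrank_sup_add_finrank_inf_eq
      (Module.End.eigenspace f ((c:ℝ):ℂ)) (Module.End.eigenspace f ((-c:ℝ):ℂ))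
    rw [hsup, hdisj.eq_bot, finrank_bot, finrank_top] at this
    rw [← this, Module.finrank_fintype_fun_eq_card]
    omega
  have hdim2 : 2 * finrank ℂ (Module.End.eigenspace f ((c:ℝ):ℂ)) = Fintype.card m := by
    rw [← hcard, hfr c]; ring
  have hpos : 0 < finrank ℂ (Module.End.eigenspace f ((c:ℝ):ℂ)) := by
    have : 0 < Fintype.card m := Fintype.card_pos
    omega
  have hnebot : ∀ μ : ℝ, finrank ℂ (Module.End.eigenspace f ((μ:ℝ):ℂ)) ≠ 0 →
      Module.End.eigenspace f ((μ:ℝ):ℂ) ≠ ⊥ := by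
    intro μ h hbot
    rw [hbot, finrank_bot] at h
    exact h rfl
  -- spectrum
  have hspec : spectrum ℂ M = {((c:ℝ):ℂ), ((-c:ℝ):ℂ)} := by
    have heq : Matrix.toLinAlgEquiv' M = f := rfl
    rw [← AlgEquiv.spectrum_eq (Matrix.toLinAlgEquiv' (n := m) (R := ℂ)) M, heq]
    ext μ
    rw [← Module.End.hasEigenvalue_iff_mem_spectrum, Module.End.hasEigenvalue_iff,
      Set.mem_insert_iff, Set.mem_singleton_iff]
    constructor
    · intro h
      obtain ⟨v, hv, hvne⟩ := Submodule.exists_mem_ne_zero_of_ne_bot h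
      rw [hmem] at hv
      have h2 : (μ^2) • v = ((c:ℂ)^2) • v := by
        have h2' := hff v
        rw [hv, f.map_smul, hv, smul_smul, ← pow_two] at h2'
        exact h2'
      have h3 : (μ^2 - (c:ℂ)^2) • v = 0 := by rw [sub_smul, h2, sub_self]
      have h4 : μ^2 - (c:ℂ)^2 = 0 := (smul_eq_zero.mp h3).resolve_right hvne
      have h5 : (μ - (c:ℂ)) * (μ + (c:ℂ)) = 0 := by linear_combination h4
      rcases mul_eq_zero.mp h5 with h6 | h6
      · exact Or.inl (by linear_combination h6)
      · exact Or.inr (by push_cast; linear_combination h6)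
    · intro h
      rcases h with h | h
      · subst h
        exact hnebot c hpos.ne'
      · subst h
        refine hnebot (-c) ?_
        rw [hfr c]
        exact hpos.ne'
  exact ⟨hspec, hdim2, hfr c⟩

lemma sq_helper (Ω : Matrix m m ℝ) (r : ℝ) (hr : 0 ≤ r) (h : Ω * Ω = (-r) • 1) :
    (Complex.I • Ω.map Complex.ofReal) * (Complex.I • Ω.map Complex.ofReal)
      = ((Real.sqrt r : ℝ) : ℂ) ^ 2 • 1 := by
  have h1 : (Ω.map Complex.ofReal) * (Ω.map Complex.ofReal) = ((-r : ℝ) : ℂ) • 1 := by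
    rw [show (Complex.ofReal : ℝ → ℂ) = ⇑Complex.ofRealHom from rfl, ← Matrix.map_mul, h]
    ext i j
    simp [Matrix.map_apply, Matrix.smul_apply, Matrix.one_apply]
    split <;> simp
  rw [Matrix.smul_mul, Matrix.mul_smul, smul_smul, Complex.I_mul_I, h1, smul_smul]
  congr 1
  rw [← Complex.ofReal_pow, Real.sq_sqrt hr]
  push_cast; ring


lemma blocks1 {N : ℕ} (s2 : ℝ) (B : Matrix (Fin N) (Fin N) ℝ)
    (hB1 : B * Bᵀ = s2 • 1) (hB2 : Bᵀ * B = s2 • 1) :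
    (Matrix.fromBlocks (0 : Matrix (Fin N) (Fin N) ℝ) B (-Bᵀ) 0)
      * (Matrix.fromBlocks (0 : Matrix (Fin N) (Fin N) ℝ) B (-Bᵀ) 0) = (-s2) • 1 := by
  rw [Matrix.fromBlocks_multiply, show (1 : Matrix (Fin N ⊕ Fin N) (Fin N ⊕ Fin N) ℝ)
    = Matrix.fromBlocks 1 0 0 1 from Matrix.fromBlocks_one.symm, Matrix.fromBlocks_smul]
  simp [hB1, hB2]

lemma blocks2 {N : ℕ} (s2 : ℝ) (A D : Matrix (Fin N) (Fin N) ℝ)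
    (hA : A * A = (-s2) • 1) (hD : D * D = (-s2) • 1) :
    (Matrix.fromBlocks (-A) (0 : Matrix (Fin N) (Fin N) ℝ) 0 D)
      * (Matrix.fromBlocks (-A) (0 : Matrix (Fin N) (Fin N) ℝ) 0 D) = (-s2) • 1 := by
  rw [Matrix.fromBlocks_multiply, show (1 : Matrix (Fin N ⊕ Fin N) (Fin N ⊕ Fin N) ℝ)
    = Matrix.fromBlocks 1 0 0 1 from Matrix.fromBlocks_one.symm, Matrix.fromBlocks_smul]
  simp [hA, hD]


/-- If `μ = 0` and `ν ≠ 0` then `i·Ω(z)` (with `Ω(z) = [[0, B(ν)],[-B(ν)ᵀ, 0]]`) has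
exactly the eigenvalues `±‖ν‖`, each with eigenspace of dimension `N`.  Similarly, if
`ν = 0` and `μ ≠ 0` then `i·Ω(z) = i·diag(-A(μ), D(μ))` has eigenvalues `±‖μ‖`, each of
multiplicity `N`. -/
theorem statement11 :
    (∀ (s N : ℕ), 0 < s → 0 < N → ∀ ν : Fin s → ℝ, ν ≠ 0 →
      ∀ B : Matrix (Fin N) (Fin N) ℝ,
        B * Bᵀ = (∑ j, ν j ^ 2) • (1 : Matrix (Fin N) (Fin N) ℝ) →
        Bᵀ * B = (∑ j, ν j ^ 2) • (1 : Matrix (Fin N) (Fin N) ℝ) →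
        spectrum ℂ (Complex.I •
            (Matrix.fromBlocks (0 : Matrix (Fin N) (Fin N) ℝ) B (-Bᵀ) 0).map
              (Complex.ofReal))
          = {((Real.sqrt (∑ j, ν j ^ 2) : ℝ) : ℂ),
             (-(Real.sqrt (∑ j, ν j ^ 2) : ℝ) : ℂ)} ∧
        Module.finrank ℂ
          ↥(Module.End.eigenspace
              (Matrix.mulVecLin (Complex.I •
                (Matrix.fromBlocks (0 : Matrix (Fin N) (Fin N) ℝ) B (-Bᵀ) 0).map
                  (Complex.ofReal)))
              ((Real.sqrt (∑ j, ν j ^ 2) : ℝ) : ℂ)) = N ∧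
        Module.finrank ℂ
          ↥(Module.End.eigenspace
              (Matrix.mulVecLin (Complex.I •
                (Matrix.fromBlocks (0 : Matrix (Fin N) (Fin N) ℝ) B (-Bᵀ) 0).map
                  (Complex.ofReal)))
              (-(Real.sqrt (∑ j, ν j ^ 2) : ℝ) : ℂ)) = N) ∧
    (∀ (r N : ℕ), 0 < r → 0 < N → ∀ μ : Fin r → ℝ, μ ≠ 0 →
      ∀ A D : Matrix (Fin N) (Fin N) ℝ,
        Aᵀ = -A → Dᵀ = -D →
        A * A = (-(∑ i, μ i ^ 2)) • (1 : Matrix (Fin N) (Fin N) ℝ) →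
        D * D = (-(∑ i, μ i ^ 2)) • (1 : Matrix (Fin N) (Fin N) ℝ) →
        spectrum ℂ (Complex.I •
            (Matrix.fromBlocks (-A) (0 : Matrix (Fin N) (Fin N) ℝ) 0 D).map
              (Complex.ofReal))
          = {((Real.sqrt (∑ i, μ i ^ 2) : ℝ) : ℂ),
             (-(Real.sqrt (∑ i, μ i ^ 2) : ℝ) : ℂ)} ∧
        Module.finrank ℂ
          ↥(Module.End.eigenspace
              (Matrix.mulVecLin (Complex.I •
                (Matrix.fromBlocks (-A) (0 : Matrix (Fin N) (Fin N) ℝ) 0 D).map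
                  (Complex.ofReal)))
              ((Real.sqrt (∑ i, μ i ^ 2) : ℝ) : ℂ)) = N ∧
        Module.finrank ℂ
          ↥(Module.End.eigenspace
              (Matrix.mulVecLin (Complex.I •
                (Matrix.fromBlocks (-A) (0 : Matrix (Fin N) (Fin N) ℝ) 0 D).map
                  (Complex.ofReal)))
              (-(Real.sqrt (∑ i, μ i ^ 2) : ℝ) : ℂ)) = N) := by
  constructor
  · intro s N _ hN ν hν B hB1 hB2
    have hs2 : 0 < ∑ j, ν j ^ 2 := by
      obtain ⟨j, hj⟩ := Function.ne_iff.mp hν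
      exact Finset.sum_pos' (fun i _ => sq_nonneg _) ⟨j, Finset.mem_univ j, pow_two_pos_of_ne_zero hj⟩
    have hc : 0 < Real.sqrt (∑ j, ν j ^ 2) := Real.sqrt_pos.mpr hs2
    have hsq := sq_helper (Matrix.fromBlocks (0 : Matrix (Fin N) (Fin N) ℝ) B (-Bᵀ) 0)
      _ hs2.le (blocks1 _ B hB1 hB2)
    have hN' : Nonempty (Fin N ⊕ Fin N) := ⟨Sum.inl ⟨0, hN⟩⟩
    obtain ⟨h1, h2, h3⟩ := key _ _ hc hsq
    have hcast : (-(Real.sqrt (∑ j, ν j ^ 2)) : ℂ)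
        = ((-Real.sqrt (∑ j, ν j ^ 2) : ℝ) : ℂ) := by push_cast; ring
    rw [Fintype.card_sum, Fintype.card_fin] at h2
    refine ⟨?_, by omega, ?_⟩
    · rw [h1, hcast]
    · rw [hcast, h3]; omega
  · intro r N _ hN μ hμ A D _ _ hA hD
    have hs2 : 0 < ∑ i, μ i ^ 2 := by
      obtain ⟨j, hj⟩ := Function.ne_iff.mp hμ
      exact Finset.sum_pos' (fun i _ => sq_nonneg _) ⟨j, Finset.mem_univ j, pow_two_pos_of_ne_zero hj⟩
    have hc : 0 < Real.sqrt (∑ i, μ i ^ 2) := Real.sqrt_pos.mpr hs2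
    have hsq := sq_helper (Matrix.fromBlocks (-A) (0 : Matrix (Fin N) (Fin N) ℝ) 0 D)
      _ hs2.le (blocks2 _ A D hA hD)
    have hN' : Nonempty (Fin N ⊕ Fin N) := ⟨Sum.inl ⟨0, hN⟩⟩
    obtain ⟨h1, h2, h3⟩ := key _ _ hc hsq
    have hcast : (-(Real.sqrt (∑ i, μ i ^ 2)) : ℂ)
        = ((-Real.sqrt (∑ i, μ i ^ 2) : ℝ) : ℂ) := by push_cast; ring
    rw [Fintype.card_sum, Fintype.card_fin] at h2
    refine ⟨?_, by omega, ?_⟩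
    · rw [h1, hcast]
    · rw [hcast, h3]; omega

end Key
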